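/- Let T>0, 1<γ<2, and set γ₀ := (γ−1)/2 (so 0<γ₀<1/2). For every v ∈ C²([0,T]) and every w ∈ C¹([0,T]), the fundamental bilinear identity holds: ∫_0^T D_{0+}^γ (v − v(0) − (·)v'(0))(t) · w(t) dt = ∫_0^T D_{0+}^{γ₀}(v' − v'(0))(t) · D_{T−}^{γ₀} w(t) dt, where both integrands are defined for every t ∈ (0,T) and both integrals converge absolutely. -/

import Mathlib

open MeasureTheory Set

noncomputable def ILeft (α : ℝ) (v : ℝ → ℝ) (t : ℝ) : ℝ :=
  (1 / Real.Gamma α) * ∫ s in (0:ℝ)..t, (t - s) ^ (α - 1) * v s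

noncomputable def IRight (α T : ℝ) (v : ℝ → ℝ) (t : ℝ) : ℝ :=
  (1 / Real.Gamma α) * ∫ s in t..T, (s - t) ^ (α - 1) * v s

lemma ILeft_zero (β : ℝ) (f : ℝ → ℝ) : ILeft β f 0 = 0 := by
  simp [ILeft]

lemma ILeft_one (f : ℝ → ℝ) : ILeft 1 f = fun t => ∫ s in (0:ℝ)..t, f s := by
  funext t; simp [ILeft, Real.Gamma_one]

lemma ILeft_congr {f₁ f₂ : ℝ → ℝ} {t : ℝ} (ht : 0 ≤ t) (h : EqOn f₁ f₂ (Icc 0 t)) (β : ℝ) :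
    ILeft β f₁ t = ILeft β f₂ t := by
  unfold ILeft; congr 1
  refine intervalIntegral.integral_congr fun s hs => ?_
  rw [uIcc_of_le ht] at hs
  rw [h hs]

lemma ILeft_sub_form (β : ℝ) (f : ℝ → ℝ) (t : ℝ) :
    ILeft β f t = (1 / Real.Gamma β) * ∫ r in (0:ℝ)..t, r ^ (β - 1) * f (t - r) := by
  unfold ILeft; congr 1
  have h2 := intervalIntegral.integral_comp_sub_left (a := (0:ℝ)) (b := t)
    (fun r => r ^ (β - 1) * f (t - r)) t
  simp only [sub_self, sub_zero] at h2
  calc (∫ s in (0:ℝ)..t, (t - s) ^ (β - 1) * f s)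
      = ∫ s in (0:ℝ)..t, (fun r => r ^ (β - 1) * f (t - r)) (t - s) :=
        intervalIntegral.integral_congr fun s _ => by simp [sub_sub_cancel]
    _ = ∫ r in (0:ℝ)..t, r ^ (β - 1) * f (t - r) := h2

lemma rpow_II {β : ℝ} (hβ : 0 < β) (a b : ℝ) :
    IntervalIntegrable (fun r : ℝ => r ^ (β - 1)) volume a b :=
  intervalIntegral.intervalIntegrable_rpow' (by linarith)

lemma rpow_sub_II {β : ℝ} (hβ : 0 < β) (c a b : ℝ) :
    IntervalIntegrable (fun s : ℝ => (c - s) ^ (β - 1)) volume a b := by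
  have h := (rpow_II hβ (c - a) (c - b)).comp_sub_left c
  simpa using h

lemma ILeft_integrand_II {β : ℝ} (hβ : 0 < β) {t : ℝ} (ht : 0 ≤ t) {f : ℝ → ℝ}
    (hf : ContinuousOn f (Ici 0)) :
    IntervalIntegrable (fun s => (t - s) ^ (β - 1) * f s) volume 0 t :=
  (rpow_sub_II hβ t 0 t).mul_continuousOn
    (hf.mono (by rw [uIcc_of_le ht]; exact Icc_subset_Ici_self))

lemma ILeft_continuousOn {β : ℝ} (hβ : 0 < β) {f : ℝ → ℝ} (hf : Continuous f) :
    ContinuousOn (ILeft β f) (Ici 0) := by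
  have hform : ILeft β f = fun t => (1 / Real.Gamma β) *
      ∫ r in (0:ℝ)..t, r ^ (β - 1) * f (t - r) := funext fun t => ILeft_sub_form β f t
  rw [hform]
  intro t₀ ht₀
  set c : ℝ := t₀ + 1 with hc
  have hc0 : 0 < c := by simp only [hc]; linarith [mem_Ici.mp ht₀]
  have ht₀c : t₀ < c := by simp [hc]
  obtain ⟨M, hM⟩ := (isCompact_Icc (a := -c) (b := c)).exists_bound_of_continuousOn
    hf.continuousOn
  have hM0 : 0 ≤ M := le_trans (norm_nonneg _) (hM 0 (by constructor <;> linarith))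
  set F : ℝ → ℝ → ℝ := fun t r => (Ioc (0:ℝ) t).indicator (fun r => r ^ (β - 1) * f (t - r)) r
    with hF
  have hev : ∀ᶠ t in nhdsWithin t₀ (Ici 0), t ∈ Icc 0 c := by
    filter_upwards [self_mem_nhdsWithin,
      (gt_mem_nhds ht₀c).filter_mono nhdsWithin_le_nhds] with t h1 h2
    exact ⟨h1, h2.le⟩
  have key : ContinuousWithinAt (fun t => ∫ r in Ioc (0:ℝ) c, F t r) (Ici 0) t₀ := by
    apply continuousWithinAt_of_dominated (bound := fun r => r ^ (β - 1) * M)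
    · refine Filter.Eventually.of_forall fun t => ?_
      exact ((Measurable.indicator (by fun_prop) measurableSet_Ioc).aestronglyMeasurable)
    · filter_upwards [hev] with t htc
      filter_upwards [ae_restrict_mem measurableSet_Ioc] with r hr
      by_cases hrt : r ∈ Ioc (0:ℝ) t
      · simp only [hF, indicator_of_mem hrt]
        rw [Real.norm_eq_abs, abs_mul, abs_of_nonneg (Real.rpow_nonneg hr.1.le _)]
        refine mul_le_mul_of_nonneg_left ?_ (Real.rpow_nonneg hr.1.le _)
        rw [← Real.norm_eq_abs]
        exact hM _ ⟨by linarith [hrt.2, hrt.1, htc.1], by linarith [hrt.1, htc.2]⟩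
      · simp only [hF, indicator_of_notMem hrt]
        simpa using mul_nonneg (Real.rpow_nonneg hr.1.le _) hM0
    · refine (((intervalIntegrable_iff_integrableOn_Ioc_of_le hc0.le).mp
        (rpow_II hβ 0 c)).mul_const M)
    · have hne : ∀ᵐ r : ℝ ∂volume, r ≠ t₀ := by
        rw [ae_iff]
        simpa [not_not, Set.setOf_eq_eq_singleton] using Real.volume_singleton (a := t₀)
      filter_upwards [ae_restrict_mem measurableSet_Ioc, ae_restrict_of_ae hne] with r hr hne'
      rcases lt_or_gt_of_ne hne' with hlt | hgt
      · -- r < t₀ : eventually r ∈ Ioc 0 t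
        have hev2 : ∀ᶠ t in nhds t₀, F t r = r ^ (β - 1) * f (t - r) := by
          filter_upwards [lt_mem_nhds hlt] with t hrt
          simp only [hF]; exact indicator_of_mem (mem_Ioc.mpr ⟨hr.1, hrt.le⟩) _
        have hcont : ContinuousAt (fun t => r ^ (β - 1) * f (t - r)) t₀ :=
          (continuousAt_const.mul ((hf.continuousAt).comp
            ((continuousAt_id).sub continuousAt_const)))
        exact (hcont.congr (hev2.mono fun _ h => h.symm)).continuousWithinAt
      · have hev2 : ∀ᶠ t in nhds t₀, F t r = 0 := by
          filter_upwards [gt_mem_nhds hgt] with t hrt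
          simp only [hF]; exact indicator_of_notMem (fun hmem => absurd hmem.2 (not_le.mpr hrt)) _
        have : ContinuousAt (fun t => F t r) t₀ :=
          (continuousAt_const (y := (0:ℝ))).congr (hev2.mono fun _ h => h.symm)
        exact this.continuousWithinAt
  have heq : ∀ᶠ t in nhdsWithin t₀ (Ici 0),
      (1 / Real.Gamma β) * ∫ r in (0:ℝ)..t, r ^ (β - 1) * f (t - r)
        = (1 / Real.Gamma β) * ∫ r in Ioc (0:ℝ) c, F t r := by
    filter_upwards [hev] with t htc
    congr 1
    simp only [hF]
    rw [intervalIntegral.integral_of_le htc.1,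
      ← MeasureTheory.integral_indicator (measurableSet_Ioc),
      ← MeasureTheory.integral_indicator (measurableSet_Ioc)]
    congr 1
    rw [Set.indicator_indicator, Set.inter_eq_self_of_subset_right
      (Ioc_subset_Ioc_right htc.2)]
  refine ContinuousWithinAt.congr_of_eventuallyEq (key.const_mul _) heq ?_
  · -- equality at the point t₀
    have := heq.self_of_nhdsWithin (mem_Ici.mpr (mem_Ici.mp ht₀))
    exact this

lemma hasDerivAt_primitive {q : ℝ → ℝ} (hq : ContinuousOn q (Ici 0)) {x : ℝ} (hx : 0 < x) :
    HasDerivAt (fun t => ∫ s in (0:ℝ)..t, q s) (q x) x := by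
  refine intervalIntegral.integral_hasDerivAt_right
    ((hq.mono (by rw [uIcc_of_le hx.le]; exact Icc_subset_Ici_self)).intervalIntegrable)
    ?_ (hq.continuousAt (Ici_mem_nhds hx))
  exact (hq.mono Ioi_subset_Ici_self).stronglyMeasurableAtFilter isOpen_Ioi x hx

lemma beta_eval {a b : ℝ} (ha : 0 < a) (hb : 0 < b) :
    ∫ u in (0:ℝ)..1, u ^ (b - 1) * (1 - u) ^ (a - 1)
      = Real.Gamma a * Real.Gamma b / Real.Gamma (a + b) := by
  have h := Complex.Gamma_mul_Gamma_eq_betaIntegral (s := (b:ℂ)) (t := (a:ℂ))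
    (by simpa using hb) (by simpa using ha)
  have hβ : Complex.betaIntegral (b:ℂ) (a:ℂ)
      = ((∫ u in (0:ℝ)..1, u ^ (b - 1) * (1 - u) ^ (a - 1) : ℝ) : ℂ) := by
    rw [Complex.betaIntegral, ← intervalIntegral.integral_ofReal]
    refine intervalIntegral.integral_congr fun x hx => ?_
    rw [uIcc_of_le zero_le_one] at hx
    rw [Complex.ofReal_mul, Complex.ofReal_cpow hx.1,
      Complex.ofReal_cpow (by linarith [hx.2] : (0:ℝ) ≤ 1 - x)]
    push_cast
    ring
  rw [hβ, Complex.Gamma_ofReal, Complex.Gamma_ofReal, show (b:ℂ) + (a:ℂ) = ((b + a : ℝ) : ℂ) by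
    push_cast; ring, Complex.Gamma_ofReal, ← Complex.ofReal_mul, ← Complex.ofReal_mul] at h
  have h' := Complex.ofReal_inj.mp h
  have hΓ : Real.Gamma (a + b) ≠ 0 := (Real.Gamma_pos_of_pos (by linarith)).ne'
  rw [add_comm b a] at h'
  field_simp
  linear_combination -h'

lemma beta_kernel {a b : ℝ} (ha : 0 < a) (hb : 0 < b) {y x : ℝ} (hyx : y < x) :
    ∫ s in y..x, (x - s) ^ (a - 1) * (s - y) ^ (b - 1)
      = (x - y) ^ (a + b - 1) * (Real.Gamma a * Real.Gamma b / Real.Gamma (a + b)) := by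
  set c : ℝ := x - y with hc
  have hc0 : 0 < c := by simp [hc]; linarith
  have step1 : (∫ s in y..x, (x - s) ^ (a - 1) * (s - y) ^ (b - 1))
      = ∫ u in (0:ℝ)..c, (x - (y + u)) ^ (a - 1) * u ^ (b - 1) := by
    have h2 := intervalIntegral.integral_comp_add_left (a := (0:ℝ)) (b := c)
      (fun s => (x - s) ^ (a - 1) * (s - y) ^ (b - 1)) y
    simp only [add_zero] at h2
    rw [show y + c = x by simp [hc]] at h2
    rw [← h2]
    refine intervalIntegral.integral_congr fun u hu => by simp [add_sub_cancel_left]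
  have step2 : (∫ u in (0:ℝ)..c, (x - (y + u)) ^ (a - 1) * u ^ (b - 1))
      = c * ∫ u in (0:ℝ)..1, (x - (y + c * u)) ^ (a - 1) * (c * u) ^ (b - 1) := by
    have h3 := intervalIntegral.integral_comp_mul_left (a := (0:ℝ)) (b := 1)
      (fun u => (x - (y + u)) ^ (a - 1) * u ^ (b - 1)) hc0.ne'
    simp only [mul_zero, mul_one] at h3
    rw [h3, smul_eq_mul, ← mul_assoc, mul_inv_cancel₀ hc0.ne', one_mul]
  have step3 : (∫ u in (0:ℝ)..1, (x - (y + c * u)) ^ (a - 1) * (c * u) ^ (b - 1))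
      = c ^ (a - 1) * c ^ (b - 1) * ∫ u in (0:ℝ)..1, u ^ (b - 1) * (1 - u) ^ (a - 1) := by
    rw [← intervalIntegral.integral_const_mul]
    refine intervalIntegral.integral_congr fun u hu => ?_
    rw [uIcc_of_le zero_le_one] at hu
    have h1u : (0:ℝ) ≤ 1 - u := by linarith [hu.2]
    have hxy : x - (y + c * u) = c * (1 - u) := by simp [hc]; ring
    rw [hxy, Real.mul_rpow hc0.le h1u, Real.mul_rpow hc0.le hu.1]
    ring
  rw [step1, step2, step3, beta_eval ha hb]
  have : c * (c ^ (a - 1) * c ^ (b - 1)) = c ^ (a + b - 1) := by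
    rw [show a + b - 1 = (a - 1) + (b - 1) + 1 by ring, Real.rpow_add hc0, Real.rpow_add hc0,
      Real.rpow_one]
    ring
  rw [← mul_assoc, this, hc]

lemma fubini_tri {b t : ℝ} (hb : 0 < b) (ht : 0 < t) {c d : ℝ → ℝ}
    (hc : Measurable c) (hcInt : IntegrableOn (fun s => c (t - s)) (Ioc 0 t))
    (hd : Continuous d) :
    (∫ s in Ioc (0:ℝ) t, c (t - s) * ∫ r in Ioc (0:ℝ) s, (s - r) ^ (b - 1) * d r)
      = ∫ r in Ioc (0:ℝ) t, d r * ∫ s in Ioc r t, c (t - s) * (s - r) ^ (b - 1) := by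
  set μ : Measure ℝ := volume.restrict (Ioc (0:ℝ) t) with hμ
  set F : ℝ → ℝ → ℝ :=
    fun s r => if r < s then c (t - s) * ((s - r) ^ (b - 1) * d r) else 0 with hFdef
  obtain ⟨Md, hMd⟩ := (isCompact_Icc (a := (0:ℝ)) (b := t)).exists_bound_of_continuousOn
    hd.continuousOn
  have hMd0 : 0 ≤ Md := le_trans (norm_nonneg _) (hMd 0 ⟨le_refl 0, ht.le⟩)
  have hFm : AEStronglyMeasurable (Function.uncurry F) (μ.prod μ) := by
    refine Measurable.aestronglyMeasurable ?_
    have : Function.uncurry F = fun p : ℝ × ℝ =>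
        if p.2 < p.1 then c (t - p.1) * ((p.1 - p.2) ^ (b - 1) * d p.2) else 0 := rfl
    rw [this]
    exact Measurable.ite (measurableSet_lt measurable_snd measurable_fst)
      ((hc.comp (measurable_const.sub measurable_fst)).mul
        ((by fun_prop : Measurable fun p : ℝ × ℝ => (p.1 - p.2) ^ (b - 1)).mul
          (hd.measurable.comp measurable_snd))) measurable_const
  have hFind : ∀ s : ℝ, (fun r => F s r)
      = (Iio s).indicator (fun r => c (t - s) * ((s - r) ^ (b - 1) * d r)) := by
    intro s; funext r; by_cases h : r < s <;> simp [hFdef, indicator_apply, mem_Iio, h]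
  have hslice : ∀ s ∈ Ioc (0:ℝ) t, Integrable (fun r => F s r) μ := by
    intro s hs
    have h2 : IntegrableOn (fun r => (s - r) ^ (b - 1) * d r) (Ioc 0 t) volume :=
      (intervalIntegrable_iff_integrableOn_Ioc_of_le ht.le).mp
        ((rpow_sub_II hb s 0 t).mul_continuousOn hd.continuousOn)
    have h3 : Integrable (fun r => c (t - s) * ((s - r) ^ (b - 1) * d r)) μ :=
      h2.const_mul _
    rw [hFind s]
    exact h3.indicator measurableSet_Iio
  have hrestrict : ∀ s : ℝ, s ∈ Ioc (0:ℝ) t →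
      μ.restrict (Iio s) = volume.restrict (Ioo 0 s) := by
    intro s hs
    rw [hμ, Measure.restrict_restrict measurableSet_Iio]
    congr 1
    ext r
    simp only [mem_inter_iff, mem_Ioc, mem_Iio, mem_Ioo]
    constructor
    · rintro ⟨h3, h1, h2⟩; exact ⟨h1, h3⟩
    · rintro ⟨h1, h2⟩; exact ⟨h2, h1, le_trans h2.le hs.2⟩
  have hkernel_val : ∀ s ∈ Ioc (0:ℝ) t,
      (∫ r in Ioc (0:ℝ) s, (s - r) ^ (b - 1)) = s ^ b / b := by
    intro s hs
    rw [← intervalIntegral.integral_of_le hs.1.le]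
    have h2 := intervalIntegral.integral_comp_sub_left (a := (0:ℝ)) (b := s)
      (fun r => r ^ (b - 1)) s
    simp only [sub_self, sub_zero] at h2
    rw [show (∫ r in (0:ℝ)..s, (s - r) ^ (b - 1))
        = ∫ r in (0:ℝ)..s, (fun u : ℝ => u ^ (b - 1)) (s - r) from rfl, h2,
      integral_rpow (Or.inl (by linarith))]
    rw [sub_add_cancel, Real.zero_rpow hb.ne']
    ring
  have hnorm : Integrable (fun s => ∫ r, ‖F s r‖ ∂μ) μ := by
    refine Integrable.mono' ((hcInt.abs.mul_const (Md * t ^ b / b))) ?_ ?_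
    · exact (hFm.norm).integral_prod_right'
    · filter_upwards [ae_restrict_mem measurableSet_Ioc] with s hs
      rw [Real.norm_eq_abs, abs_of_nonneg (integral_nonneg fun r => norm_nonneg _)]
      set bnd : ℝ → ℝ :=
        (Ioc (0:ℝ) s).indicator (fun r => (|c (t - s)| * Md) * (s - r) ^ (b - 1)) with hbnd
      have hbnd_int : Integrable bnd μ := by
        rw [hbnd]
        refine (integrable_indicator_iff measurableSet_Ioc).mpr ?_
        rw [IntegrableOn, hμ, Measure.restrict_restrict measurableSet_Ioc,
          Set.Ioc_inter_Ioc, sup_idem, min_eq_left hs.2]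
        exact (((intervalIntegrable_iff_integrableOn_Ioc_of_le hs.1.le).mp
          (rpow_sub_II hb s 0 s)).const_mul _)
      have hle : (∫ r, ‖F s r‖ ∂μ) ≤ ∫ r, bnd r ∂μ := by
        refine integral_mono_of_nonneg (Filter.Eventually.of_forall fun r => norm_nonneg _)
          hbnd_int ?_
        filter_upwards [ae_restrict_mem measurableSet_Ioc] with r hr
        by_cases hrs : r < s
        · have hmem : r ∈ Ioc (0:ℝ) s := ⟨hr.1, hrs.le⟩
          rw [hbnd]
          simp only [indicator_of_mem hmem, hFdef, if_pos hrs]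
          rw [Real.norm_eq_abs, abs_mul, abs_mul,
            abs_of_nonneg (Real.rpow_nonneg (by linarith : (0:ℝ) ≤ s - r) _)]
          rw [mul_assoc, mul_comm Md ((s - r) ^ (b - 1)), ← mul_assoc, mul_assoc]
          refine mul_le_mul_of_nonneg_left ?_ (abs_nonneg _)
          refine mul_le_mul_of_nonneg_left ?_ (Real.rpow_nonneg (by linarith) _)
          rw [← Real.norm_eq_abs]
          exact hMd r ⟨hr.1.le, hr.2⟩
        · rw [hbnd, hFdef]
          simp only [if_neg hrs]
          simp only [norm_zero]
          by_cases hmem : r ∈ Ioc (0:ℝ) s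
          · simp only [indicator_of_mem hmem]
            have : (0:ℝ) ≤ s - r := by linarith [hmem.2]
            positivity
          · simp only [indicator_of_notMem hmem]; exact le_refl 0
      refine hle.trans ?_
      rw [hbnd, MeasureTheory.integral_indicator measurableSet_Ioc]
      rw [hμ, Measure.restrict_restrict measurableSet_Ioc, Set.Ioc_inter_Ioc, sup_idem,
        min_eq_left hs.2, MeasureTheory.integral_const_mul, hkernel_val s hs]
      have h1 : s ^ b ≤ t ^ b := Real.rpow_le_rpow hs.1.le hs.2 hb.le
      have h2 : (0:ℝ) ≤ |c (t - s)| := abs_nonneg _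
      calc |c (t - s)| * Md * (s ^ b / b) ≤ |c (t - s)| * Md * (t ^ b / b) := by
            gcongr
        _ = |c (t - s)| * (Md * t ^ b / b) := by ring
  have hInt : Integrable (Function.uncurry F) (μ.prod μ) := by
    refine (integrable_prod_iff hFm).mpr ⟨?_, hnorm⟩
    filter_upwards [ae_restrict_mem measurableSet_Ioc] with s hs
    exact hslice s hs
  have swap := MeasureTheory.integral_integral_swap (f := F) hInt
  calc (∫ s in Ioc (0:ℝ) t, c (t - s) * ∫ r in Ioc (0:ℝ) s, (s - r) ^ (b - 1) * d r)
      = ∫ s, (∫ r, F s r ∂μ) ∂μ := by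
        refine (setIntegral_congr_fun measurableSet_Ioc fun s hs => ?_).symm
        rw [hFind s, MeasureTheory.integral_indicator measurableSet_Iio, hrestrict s hs,
          ← MeasureTheory.integral_Ioc_eq_integral_Ioo, MeasureTheory.integral_const_mul]
    _ = ∫ r, (∫ s, F s r ∂μ) ∂μ := swap
    _ = ∫ r in Ioc (0:ℝ) t, d r * ∫ s in Ioc r t, c (t - s) * (s - r) ^ (b - 1) := by
        refine setIntegral_congr_fun measurableSet_Ioc fun r hr => ?_
        have hind : (fun s => F s r)
            = (Ioi r).indicator (fun s => d r * (c (t - s) * (s - r) ^ (b - 1))) := by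
          funext s; by_cases h : r < s <;>
            simp [hFdef, indicator_apply, mem_Ioi, h] <;> ring
        rw [hind, MeasureTheory.integral_indicator measurableSet_Ioi]
        have : μ.restrict (Ioi r) = volume.restrict (Ioc r t) := by
          rw [hμ, Measure.restrict_restrict measurableSet_Ioi]
          congr 1
          ext s
          simp only [mem_inter_iff, mem_Ioi, mem_Ioc]
          constructor
          · rintro ⟨h1, h2, h3⟩; exact ⟨h1, h3⟩
          · rintro ⟨h1, h2⟩; exact ⟨h1, lt_trans hr.1 h1, h2⟩
        rw [this, MeasureTheory.integral_const_mul]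

lemma ILeft_comp {a b : ℝ} (ha : 0 < a) (hb : 0 < b) {f : ℝ → ℝ} (hf : Continuous f)
    {t : ℝ} (ht : 0 ≤ t) : ILeft a (ILeft b f) t = ILeft (a + b) f t := by
  rcases ht.eq_or_lt with h | h
  · rw [← h, ILeft_zero, ILeft_zero]
  have hΓa : Real.Gamma a ≠ 0 := (Real.Gamma_pos_of_pos ha).ne'
  have hΓb : Real.Gamma b ≠ 0 := (Real.Gamma_pos_of_pos hb).ne'
  have hΓab : Real.Gamma (a + b) ≠ 0 := (Real.Gamma_pos_of_pos (by linarith)).ne'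
  have key := fubini_tri hb h (c := fun x => x ^ (a - 1)) (d := f)
    (by fun_prop)
    ((intervalIntegrable_iff_integrableOn_Ioc_of_le h.le).mp (rpow_sub_II ha t 0 t))
    hf
  -- massage the LHS
  have lhs_eq : ILeft a (ILeft b f) t = (1 / Real.Gamma a) * ((1 / Real.Gamma b) *
      ∫ s in Ioc (0:ℝ) t, (t - s) ^ (a - 1) * ∫ r in Ioc (0:ℝ) s, (s - r) ^ (b - 1) * f r) := by
    unfold ILeft
    rw [intervalIntegral.integral_of_le h.le,
      show (∫ s in Ioc (0:ℝ) t, (t - s) ^ (a - 1) *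
            ((1 / Real.Gamma b) * ∫ r in (0:ℝ)..s, (s - r) ^ (b - 1) * f r))
          = ∫ s in Ioc (0:ℝ) t, (1 / Real.Gamma b) *
            ((t - s) ^ (a - 1) * ∫ r in Ioc (0:ℝ) s, (s - r) ^ (b - 1) * f r) from
        setIntegral_congr_fun measurableSet_Ioc fun s hs => by
          rw [intervalIntegral.integral_of_le hs.1.le]; ring,
      MeasureTheory.integral_const_mul]
  have rhs_eq : ILeft (a + b) f t = (1 / Real.Gamma (a + b)) *
      ∫ r in Ioc (0:ℝ) t, (t - r) ^ (a + b - 1) * f r := by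
    unfold ILeft
    rw [intervalIntegral.integral_of_le h.le]
  rw [lhs_eq, rhs_eq]
  rw [key]
  -- now evaluate the inner beta integral on `Ioo` to have strict inequality
  rw [MeasureTheory.integral_Ioc_eq_integral_Ioo
      (f := fun r => f r * ∫ s in Ioc r t, (t - s) ^ (a - 1) * (s - r) ^ (b - 1)),
    MeasureTheory.integral_Ioc_eq_integral_Ioo (f := fun r => (t - r) ^ (a + b - 1) * f r)]
  rw [show (∫ r in Ioo (0:ℝ) t, f r * ∫ s in Ioc r t, (t - s) ^ (a - 1) * (s - r) ^ (b - 1))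
      = ∫ r in Ioo (0:ℝ) t, (Real.Gamma a * Real.Gamma b / Real.Gamma (a + b)) *
          ((t - r) ^ (a + b - 1) * f r) from
    setIntegral_congr_fun measurableSet_Ioo fun r hr => by
      rw [← intervalIntegral.integral_of_le hr.2.le, beta_kernel ha hb hr.2]
      ring]
  rw [MeasureTheory.integral_const_mul]
  field_simp

lemma hasDerivAt_ILeft_succ {β : ℝ} (hβ : 0 < β) {f : ℝ → ℝ} (hf : Continuous f)
    {x : ℝ} (hx : 0 < x) : HasDerivAt (ILeft (β + 1) f) (ILeft β f x) x := by
  have h1 : ∀ y ∈ Ioi (0:ℝ), ILeft (β + 1) f y = (fun τ => ∫ s in (0:ℝ)..τ, ILeft β f s) y := by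
    intro y hy
    rw [show β + 1 = 1 + β by ring, ← ILeft_comp one_pos hβ hf (le_of_lt hy), ILeft_one]
  have prim := hasDerivAt_primitive (ILeft_continuousOn hβ hf) hx
  exact prim.congr_of_eventuallyEq (Filter.eventuallyEq_of_mem (Ioi_mem_nhds hx) h1)

lemma ILeft_IBP {β : ℝ} (hβ : 0 < β) {φ φ' : ℝ → ℝ} (hφ : ∀ s, HasDerivAt φ (φ' s) s)
    (hφ' : Continuous φ') {τ : ℝ} (hτ : 0 ≤ τ) :
    ILeft β φ τ = τ ^ β * φ 0 / Real.Gamma (β + 1) + ILeft (β + 1) φ' τ := by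
  have hφc : Continuous φ := by
    rw [continuous_iff_continuousAt]; exact fun s => (hφ s).continuousAt
  rcases hτ.eq_or_lt with h | h
  · rw [← h, ILeft_zero, ILeft_zero, Real.zero_rpow hβ.ne']; simp
  have hΓ : 0 < Real.Gamma β := Real.Gamma_pos_of_pos hβ
  have hrpc : Continuous fun s : ℝ => (τ - s) ^ β := by
    rw [continuous_iff_continuousAt]
    intro s
    exact (Real.continuousAt_rpow_const _ _ (Or.inr hβ.le)).comp
      ((continuousAt_const).sub continuousAt_id)
  -- FTC on U s = -(τ - s)^β / β * φ s
  have hderiv : ∀ s ∈ Ioo (0:ℝ) τ, HasDerivAt (fun s => -((τ - s) ^ β / β) * φ s)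
      ((τ - s) ^ (β - 1) * φ s + -((τ - s) ^ β / β) * φ' s) s := by
    intro s hs
    have h1 : HasDerivAt (fun s : ℝ => (τ - s) ^ β) (β * (τ - s) ^ (β - 1) * (-1)) s := by
      exact (Real.hasDerivAt_rpow_const (x := τ - s) (p := β)
        (Or.inl (by linarith [hs.2] : τ - s ≠ 0))).comp s
        ((hasDerivAt_id s).const_sub τ)
    have h2 : HasDerivAt (fun s : ℝ => -((τ - s) ^ β / β)) ((τ - s) ^ (β - 1)) s := by
      have := (h1.div_const β).neg
      refine this.congr_deriv ?_
      rw [mul_neg_one, neg_div, neg_neg, mul_div_cancel_left₀ _ hβ.ne']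
    exact h2.mul (hφ s)
  have hcont : ContinuousOn (fun s => -((τ - s) ^ β / β) * φ s) (Icc 0 τ) :=
    (((hrpc.div_const β).neg).mul hφc).continuousOn
  have hint : IntervalIntegrable
      (fun s => (τ - s) ^ (β - 1) * φ s + -((τ - s) ^ β / β) * φ' s) volume 0 τ := by
    refine IntervalIntegrable.add ?_ ?_
    · exact (rpow_sub_II hβ τ 0 τ).mul_continuousOn hφc.continuousOn
    · exact (((hrpc.div_const β).neg).mul hφ').intervalIntegrable 0 τ
  have ftc := intervalIntegral.integral_eq_sub_of_hasDeriv_right_of_le h.le hcont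
    (fun s hs => (hderiv s hs).hasDerivWithinAt) hint
  have hsplit := intervalIntegral.integral_add (f := fun s => (τ - s) ^ (β - 1) * φ s)
    (g := fun s => -((τ - s) ^ β / β) * φ' s)
    ((rpow_sub_II hβ τ 0 τ).mul_continuousOn hφc.continuousOn)
    ((((hrpc.div_const β).neg).mul hφ').intervalIntegrable 0 τ)
  rw [hsplit] at ftc
  have hpull : (∫ s in (0:ℝ)..τ, -((τ - s) ^ β / β) * φ' s)
      = (-(1/β)) * ∫ s in (0:ℝ)..τ, (τ - s) ^ β * φ' s := by
    rw [← intervalIntegral.integral_const_mul]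
    exact intervalIntegral.integral_congr fun s _ => by ring
  rw [hpull] at ftc
  rw [sub_self, Real.zero_rpow hβ.ne'] at ftc
  rw [sub_zero] at ftc
  -- ftc : I1 + (-(1/β)) * I2 = -(0/β) * φ τ - -(τ^β/β) * φ 0
  unfold ILeft
  simp only [add_sub_cancel_right]
  rw [Real.Gamma_add_one hβ.ne']
  have hΓβ : Real.Gamma β ≠ 0 := hΓ.ne'
  have hβ' : β ≠ 0 := hβ.ne'
  field_simp at ftc
  field_simp
  linear_combination ftc

lemma IRight_eq (β T : ℝ) (w : ℝ → ℝ) :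
    IRight β T w = fun t => ILeft β (fun s => w (T - s)) (T - t) := by
  funext t
  unfold IRight ILeft
  congr 1
  have h2 := intervalIntegral.integral_comp_sub_left (a := t) (b := T)
    (fun σ => (T - t - σ) ^ (β - 1) * w (T - σ)) T
  simp only [sub_self] at h2
  calc (∫ s in t..T, (s - t) ^ (β - 1) * w s)
      = ∫ s in t..T, (fun σ => (T - t - σ) ^ (β - 1) * w (T - σ)) (T - s) :=
        intervalIntegral.integral_congr fun s _ => by
          simp only []
          rw [show T - t - (T - s) = s - t by ring, sub_sub_cancel]
    _ = ∫ σ in (0:ℝ)..(T - t), (T - t - σ) ^ (β - 1) * w (T - σ) := h2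

/-- The fundamental bilinear identity: for `1 < γ < 2`, `γ₀ = (γ-1)/2`, `v ∈ C²([0,T])` and
`w ∈ C¹([0,T])`,
`∫_0^T D_{0+}^γ (v - v(0) - t v'(0)) · w dt = ∫_0^T D_{0+}^{γ₀}(v' - v'(0)) · D_{T-}^{γ₀} w dt`,
both integrands being absolutely integrable on `(0,T)`.  Here
`D_{0+}^γ u = (d/dt)² I_{0+}^{2-γ} u`, `D_{0+}^{γ₀} u = (d/dt) I_{0+}^{1-γ₀} u` and
`D_{T-}^{γ₀} u = -(d/dt) I_{T-}^{1-γ₀} u`. -/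
theorem bilinear_identity (T γ : ℝ) (hT : 0 < T) (hγ1 : 1 < γ) (hγ2 : γ < 2)
    (v w : ℝ → ℝ) (hv : ContDiff ℝ 2 v) (hw : ContDiff ℝ 1 w) :
    IntegrableOn
      (fun t => deriv (deriv (ILeft (2 - γ) (fun s => v s - v 0 - s * deriv v 0))) t * w t)
      (Ioo 0 T) ∧
    IntegrableOn
      (fun t => deriv (ILeft (1 - (γ - 1) / 2) (fun s => deriv v s - deriv v 0)) t *
        (-(deriv (IRight (1 - (γ - 1) / 2) T w) t)))
      (Ioo 0 T) ∧
    (∫ t in Ioo (0:ℝ) T,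
        deriv (deriv (ILeft (2 - γ) (fun s => v s - v 0 - s * deriv v 0))) t * w t) =
      ∫ t in Ioo (0:ℝ) T,
        deriv (ILeft (1 - (γ - 1) / 2) (fun s => deriv v s - deriv v 0)) t *
          (-(deriv (IRight (1 - (γ - 1) / 2) T w) t)) := by
  set α : ℝ := 2 - γ with hα
  set β : ℝ := 1 - (γ - 1) / 2 with hβdef
  have hα0 : 0 < α := by rw [hα]; linarith
  have hβ0 : 0 < β := by rw [hβdef]; linarith
  have hββ : β + β = α + 1 := by rw [hα, hβdef]; ring
  have hΓβ : (0:ℝ) < Real.Gamma β := Real.Gamma_pos_of_pos hβ0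
  -- smoothness facts
  have hvd : Differentiable ℝ v := hv.differentiable (by norm_num)
  have hv1 : ContDiff ℝ 1 (deriv v) :=
    ((contDiff_succ_iff_deriv (n := 1)).mp (by rw [one_add_one_eq_two]; exact hv)).2.2
  have hdvd : Differentiable ℝ (deriv v) := hv1.differentiable one_ne_zero
  have hdvc : Continuous (deriv v) := hv1.continuous
  have hf₂ : Continuous (deriv (deriv v)) := hv1.continuous_deriv le_rfl
  have hwd : Differentiable ℝ w := hw.differentiable one_ne_zero
  have hdw : Continuous (deriv w) := hw.continuous_deriv le_rfl
  have hwc : Continuous w := hw.continuous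
  have hf₁c : Continuous (fun s => deriv v s - deriv v 0) := hdvc.sub continuous_const
  -- u = I¹ f₁, f₁ = I¹ f₂
  have hu : (fun s => v s - v 0 - s * deriv v 0)
      = ILeft 1 (fun s => deriv v s - deriv v 0) := by
    funext x
    simp only [ILeft_one]
    rw [intervalIntegral.integral_sub (hdvc.intervalIntegrable 0 x) intervalIntegrable_const,
      intervalIntegral.integral_deriv_eq_sub (fun y _ => hvd y) (hdvc.intervalIntegrable 0 x),
      intervalIntegral.integral_const]
    simp only [smul_eq_mul, sub_zero]
  have hf₁ : (fun s => deriv v s - deriv v 0) = ILeft 1 (deriv (deriv v)) := by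
    funext x
    simp only [ILeft_one]
    rw [intervalIntegral.integral_deriv_eq_sub (fun y _ => hdvd y) (hf₂.intervalIntegrable 0 x)]
  -- continuity of the fractional integrals
  have hgc : ContinuousOn (ILeft α (deriv (deriv v))) (Ici 0) := ILeft_continuousOn hα0 hf₂
  have hhc : ContinuousOn (ILeft β (deriv (deriv v))) (Ici 0) := ILeft_continuousOn hβ0 hf₂
  have hGc : ContinuousOn (ILeft (α + 1) (deriv (deriv v))) (Ici 0) :=
    ILeft_continuousOn (by linarith) hf₂
  have hIcc : Icc (0:ℝ) T ⊆ Ici 0 := fun x hx => hx.1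
  have hIccu : uIcc (0:ℝ) T = Icc 0 T := uIcc_of_le hT.le
  -- E1
  have E1 : ∀ t ∈ Ioo (0:ℝ) T,
      deriv (deriv (ILeft α (fun s => v s - v 0 - s * deriv v 0))) t
        = ILeft α (deriv (deriv v)) t := by
    have e0 : EqOn (ILeft α (fun s => v s - v 0 - s * deriv v 0))
        (ILeft (α + 1 + 1) (deriv (deriv v))) (Ioi 0) := by
      intro x hx
      rw [hu, ILeft_comp hα0 one_pos hf₁c (le_of_lt hx), hf₁,
        ILeft_comp (by linarith : (0:ℝ) < α + 1) one_pos hf₂ (le_of_lt hx)]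
    have d1 : EqOn (deriv (ILeft α (fun s => v s - v 0 - s * deriv v 0)))
        (ILeft (α + 1) (deriv (deriv v))) (Ioi 0) := by
      intro x hx
      rw [Filter.EventuallyEq.deriv_eq (Filter.eventuallyEq_of_mem (Ioi_mem_nhds hx) e0)]
      exact (hasDerivAt_ILeft_succ (by linarith : (0:ℝ) < α + 1) hf₂ hx).deriv
    intro t ht
    rw [Filter.EventuallyEq.deriv_eq (Filter.eventuallyEq_of_mem (Ioi_mem_nhds ht.1) d1)]
    exact (hasDerivAt_ILeft_succ hα0 hf₂ ht.1).deriv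
  -- E2
  have E2 : ∀ t ∈ Ioo (0:ℝ) T,
      deriv (ILeft β (fun s => deriv v s - deriv v 0)) t = ILeft β (deriv (deriv v)) t := by
    have e0 : EqOn (ILeft β (fun s => deriv v s - deriv v 0))
        (ILeft (β + 1) (deriv (deriv v))) (Ioi 0) := by
      intro x hx
      rw [hf₁, ILeft_comp hβ0 one_pos hf₂ (le_of_lt hx)]
    intro t ht
    rw [Filter.EventuallyEq.deriv_eq (Filter.eventuallyEq_of_mem (Ioi_mem_nhds ht.1) e0)]
    exact (hasDerivAt_ILeft_succ hβ0 hf₂ ht.1).deriv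
  -- E3
  have hwt' : Continuous (fun s => -deriv w (T - s)) :=
    (hdw.comp (continuous_const.sub continuous_id)).neg
  have hwtD : ∀ s : ℝ, HasDerivAt (fun s => w (T - s)) (-deriv w (T - s)) s := by
    intro s
    have h1 := ((hwd (T - s)).hasDerivAt).comp s ((hasDerivAt_id s).const_sub T)
    refine h1.congr_deriv ?_
    ring
  have E3 : ∀ t ∈ Ioo (0:ℝ) T, -(deriv (IRight β T w) t)
      = (T - t) ^ (β - 1) * w T / Real.Gamma β
        + ILeft β (fun s => -deriv w (T - s)) (T - t) := by
    intro t ht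
    have hτ : (0:ℝ) < T - t := by linarith [ht.2]
    have key : EqOn (ILeft β (fun s => w (T - s)))
        (fun τ => τ ^ β * w T / Real.Gamma (β + 1)
          + ILeft (β + 1) (fun s => -deriv w (T - s)) τ) (Ioi 0) := by
      intro τ hτ'
      have := ILeft_IBP hβ0 hwtD hwt' (le_of_lt hτ')
      simpa using this
    have hR : HasDerivAt (fun τ => τ ^ β * w T / Real.Gamma (β + 1)
        + ILeft (β + 1) (fun s => -deriv w (T - s)) τ)
        ((T - t) ^ (β - 1) * w T / Real.Gamma β
          + ILeft β (fun s => -deriv w (T - s)) (T - t)) (T - t) := by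
      have h0 := (Real.hasDerivAt_rpow_const (x := T - t) (p := β)
        (Or.inl hτ.ne')).mul_const (w T / Real.Gamma (β + 1))
      have hfeq : (fun τ : ℝ => τ ^ β * w T / Real.Gamma (β + 1))
          = fun x : ℝ => x ^ β * (w T / Real.Gamma (β + 1)) :=
        funext fun x => mul_div_assoc _ _ _
      have h1 : HasDerivAt (fun τ : ℝ => τ ^ β * w T / Real.Gamma (β + 1))
          (β * (T - t) ^ (β - 1) * (w T / Real.Gamma (β + 1))) (T - t) := by
        rw [hfeq]; exact h0
      have h2 := hasDerivAt_ILeft_succ hβ0 hwt' hτ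
      have := h1.add h2
      refine this.congr_deriv ?_
      rw [Real.Gamma_add_one hβ0.ne']
      field_simp
    have hL : HasDerivAt (ILeft β (fun s => w (T - s)))
        ((T - t) ^ (β - 1) * w T / Real.Gamma β
          + ILeft β (fun s => -deriv w (T - s)) (T - t)) (T - t) :=
      hR.congr_of_eventuallyEq (Filter.eventuallyEq_of_mem (Ioi_mem_nhds hτ) key)
    have hcomp := hL.comp t ((hasDerivAt_id t).const_sub T)
    rw [IRight_eq]
    have : deriv (fun t => ILeft β (fun s => w (T - s)) (T - t)) t
        = ((T - t) ^ (β - 1) * w T / Real.Gamma β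
          + ILeft β (fun s => -deriv w (T - s)) (T - t)) * (-1) := hcomp.deriv
    rw [this]
    ring
  -- integrability of the model integrands
  have hgw : IntegrableOn (fun t => ILeft α (deriv (deriv v)) t * w t) (Ioo 0 T) :=
    (((hgc.mono hIcc).mul hwc.continuousOn).integrableOn_Icc).mono_set Ioo_subset_Icc_self
  have part1 : IntegrableOn
      (fun t => deriv (deriv (ILeft α (fun s => v s - v 0 - s * deriv v 0))) t * w t)
      (Ioo 0 T) := by
    refine hgw.congr_fun (fun t ht => ?_) measurableSet_Ioo
    rw [E1 t ht]
  have i1 : IntegrableOn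
      (fun t => ILeft β (deriv (deriv v)) t * ((T - t) ^ (β - 1) * w T / Real.Gamma β))
      (Ioo 0 T) := by
    have base : IntervalIntegrable
        (fun t => (T - t) ^ (β - 1) * ILeft β (deriv (deriv v)) t) volume 0 T :=
      (rpow_sub_II hβ0 T 0 T).mul_continuousOn (by rw [hIccu]; exact hhc.mono hIcc)
    have base2 := (base.const_mul (w T / Real.Gamma β))
    have base3 : IntegrableOn
        (fun t => (w T / Real.Gamma β) * ((T - t) ^ (β - 1) * ILeft β (deriv (deriv v)) t))
        (Ioc 0 T) := (intervalIntegrable_iff_integrableOn_Ioc_of_le hT.le).mp base2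
    refine (base3.congr_fun (fun t _ => by ring) measurableSet_Ioc).mono_set
      Ioo_subset_Ioc_self
  have hILc : ContinuousOn (fun t : ℝ => ILeft β (fun s => -deriv w (T - s)) (T - t))
      (Icc 0 T) := by
    refine (ILeft_continuousOn hβ0 hwt').comp
      ((continuous_const.sub continuous_id).continuousOn) (fun x hx => ?_)
    simp only [mem_Ici]
    linarith [hx.2]
  have i2 : IntegrableOn
      (fun t => ILeft β (deriv (deriv v)) t * ILeft β (fun s => -deriv w (T - s)) (T - t))
      (Ioo 0 T) :=
    (((hhc.mono hIcc).mul hILc).integrableOn_Icc).mono_set Ioo_subset_Icc_self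
  have part2 : IntegrableOn
      (fun t => deriv (ILeft β (fun s => deriv v s - deriv v 0)) t *
        (-(deriv (IRight β T w) t))) (Ioo 0 T) := by
    have i12 : IntegrableOn
        (fun t => ILeft β (deriv (deriv v)) t * ((T - t) ^ (β - 1) * w T / Real.Gamma β)
          + ILeft β (deriv (deriv v)) t * ILeft β (fun s => -deriv w (T - s)) (T - t))
        (Ioo 0 T) := i1.add i2
    refine (i12.congr_fun (fun t ht => ?_) measurableSet_Ioo)
    rw [E2 t ht, E3 t ht]
    ring
  refine ⟨part1, part2, ?_⟩
  -- now the integral identity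
  have hIooI : ∀ F : ℝ → ℝ, (∫ t in Ioo (0:ℝ) T, F t) = ∫ t in (0:ℝ)..T, F t := fun F => by
    rw [intervalIntegral.integral_of_le hT.le, MeasureTheory.integral_Ioc_eq_integral_Ioo]
  -- integration by parts for the left side
  have int_gw : IntervalIntegrable (fun x => ILeft α (deriv (deriv v)) x * w x) volume 0 T :=
    (by rw [hIccu]; exact (hgc.mono hIcc).mul hwc.continuousOn :
      ContinuousOn _ (uIcc 0 T)).intervalIntegrable
  have int_Gw' : IntervalIntegrable
      (fun x => ILeft (α + 1) (deriv (deriv v)) x * deriv w x) volume 0 T :=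
    (by rw [hIccu]; exact (hGc.mono hIcc).mul hdw.continuousOn :
      ContinuousOn _ (uIcc 0 T)).intervalIntegrable
  have compute1 : (∫ t in Ioo (0:ℝ) T, ILeft α (deriv (deriv v)) t * w t)
      = ILeft (α + 1) (deriv (deriv v)) T * w T
        - ∫ t in (0:ℝ)..T, ILeft (α + 1) (deriv (deriv v)) t * deriv w t := by
    have hder : ∀ x ∈ Ioo (0:ℝ) T, HasDerivWithinAt
        (fun τ => ILeft (α + 1) (deriv (deriv v)) τ * w τ)
        (ILeft α (deriv (deriv v)) x * w x
          + ILeft (α + 1) (deriv (deriv v)) x * deriv w x) (Ioi x) x := fun x hx =>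
      ((hasDerivAt_ILeft_succ hα0 hf₂ hx.1).mul ((hwd x).hasDerivAt)).hasDerivWithinAt
    have hcont2 : ContinuousOn (fun τ => ILeft (α + 1) (deriv (deriv v)) τ * w τ)
        (Icc 0 T) := (hGc.mono hIcc).mul hwc.continuousOn
    have hint2 : IntervalIntegrable
        (fun x => ILeft α (deriv (deriv v)) x * w x
          + ILeft (α + 1) (deriv (deriv v)) x * deriv w x) volume 0 T :=
      int_gw.add int_Gw'
    have ftc2 := intervalIntegral.integral_eq_sub_of_hasDeriv_right_of_le hT.le hcont2
      hder hint2
    rw [ILeft_zero, zero_mul, sub_zero] at ftc2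
    rw [intervalIntegral.integral_add int_gw int_Gw'] at ftc2
    rw [hIooI]
    linarith [ftc2]
  -- Term 1 of the right side
  have compute2 : (∫ t in Ioo (0:ℝ) T,
        ILeft β (deriv (deriv v)) t * ((T - t) ^ (β - 1) * w T / Real.Gamma β))
      = ILeft (α + 1) (deriv (deriv v)) T * w T := by
    rw [hIooI]
    have step : (∫ t in (0:ℝ)..T,
          ILeft β (deriv (deriv v)) t * ((T - t) ^ (β - 1) * w T / Real.Gamma β))
        = w T * ((1 / Real.Gamma β) *
            ∫ t in (0:ℝ)..T, (T - t) ^ (β - 1) * ILeft β (deriv (deriv v)) t) := by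
      rw [← intervalIntegral.integral_const_mul, ← intervalIntegral.integral_const_mul]
      exact intervalIntegral.integral_congr fun t _ => by ring
    rw [step]
    have : (1 / Real.Gamma β) *
        (∫ t in (0:ℝ)..T, (T - t) ^ (β - 1) * ILeft β (deriv (deriv v)) t)
        = ILeft β (ILeft β (deriv (deriv v))) T := rfl
    rw [this, ILeft_comp hβ0 hβ0 hf₂ hT.le, hββ]
    ring
  -- Term 2 of the right side
  have compute3 : (∫ t in Ioo (0:ℝ) T,
        ILeft β (deriv (deriv v)) t * ILeft β (fun s => -deriv w (T - s)) (T - t))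
      = -∫ t in (0:ℝ)..T, ILeft (α + 1) (deriv (deriv v)) t * deriv w t := by
    rw [hIooI]
    -- substitute t ↦ T - τ
    have hsub := intervalIntegral.integral_comp_sub_left (a := (0:ℝ)) (b := T)
      (fun τ => ILeft β (deriv (deriv v)) (T - τ) * ILeft β (fun s => -deriv w (T - s)) τ) T
    simp only [sub_self, sub_zero] at hsub
    have e1 : (∫ t in (0:ℝ)..T,
          ILeft β (deriv (deriv v)) t * ILeft β (fun s => -deriv w (T - s)) (T - t))
        = ∫ τ in (0:ℝ)..T,
            ILeft β (deriv (deriv v)) (T - τ) * ILeft β (fun s => -deriv w (T - s)) τ := by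
      rw [← hsub]
      exact intervalIntegral.integral_congr fun t _ => by rw [sub_sub_cancel]
    rw [e1]
    set hstar : ℝ → ℝ := fun x => ILeft β (deriv (deriv v)) (max x 0) with hhstar
    have hstarc : Continuous hstar := by
      rw [hhstar]
      exact (ILeft_continuousOn hβ0 hf₂).comp_continuous
        (continuous_id.max continuous_const) (fun x => mem_Ici.mpr (le_max_right _ _))
    have e2 : (∫ τ in (0:ℝ)..T,
          ILeft β (deriv (deriv v)) (T - τ) * ILeft β (fun s => -deriv w (T - s)) τ)
        = (1 / Real.Gamma β) * ∫ τ in Ioc (0:ℝ) T,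
            hstar (T - τ) * ∫ r in Ioc (0:ℝ) τ, (τ - r) ^ (β - 1) * (-deriv w (T - r)) := by
      rw [intervalIntegral.integral_of_le hT.le,
        show (∫ τ in Ioc (0:ℝ) T,
            ILeft β (deriv (deriv v)) (T - τ) * ILeft β (fun s => -deriv w (T - s)) τ)
          = ∫ τ in Ioc (0:ℝ) T, (1 / Real.Gamma β) *
              (hstar (T - τ) * ∫ r in Ioc (0:ℝ) τ, (τ - r) ^ (β - 1) * (-deriv w (T - r))) from
          setIntegral_congr_fun measurableSet_Ioc fun τ hτ => by
            rw [hhstar]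
            simp only []
            rw [show max (T - τ) 0 = T - τ from max_eq_left (by linarith [hτ.2])]
            unfold ILeft
            rw [intervalIntegral.integral_of_le hτ.1.le]
            ring,
        MeasureTheory.integral_const_mul]
    rw [e2]
    rw [fubini_tri hβ0 hT (c := hstar) hstarc.measurable
      ((hstarc.comp (continuous_const.sub continuous_id)).integrableOn_Ioc) hwt']
    -- evaluate the inner integral
    have inner_eval : ∀ r ∈ Ioo (0:ℝ) T,
        (∫ s in Ioc r T, hstar (T - s) * (s - r) ^ (β - 1))
          = Real.Gamma β * ILeft (α + 1) (deriv (deriv v)) (T - r) := by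
      intro r hr
      have h3 := intervalIntegral.integral_comp_sub_left (a := r) (b := T)
        (fun σ => (T - r - σ) ^ (β - 1) * hstar σ) T
      simp only [sub_self] at h3
      rw [← intervalIntegral.integral_of_le hr.2.le]
      rw [show (∫ s in r..T, hstar (T - s) * (s - r) ^ (β - 1))
          = ∫ s in r..T, (fun σ => (T - r - σ) ^ (β - 1) * hstar σ) (T - s) from
        intervalIntegral.integral_congr fun s _ => by
          simp only []
          rw [show T - r - (T - s) = s - r by ring]
          ring, h3]
      have : (∫ σ in (0:ℝ)..(T - r), (T - r - σ) ^ (β - 1) * hstar σ)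
          = Real.Gamma β * ILeft β hstar (T - r) := by
        unfold ILeft
        field_simp
      rw [this]
      have hTr : (0:ℝ) ≤ T - r := by linarith [hr.2]
      have e4 : ILeft β hstar (T - r) = ILeft β (ILeft β (deriv (deriv v))) (T - r) := by
        refine ILeft_congr hTr (fun x hx => ?_) β
        rw [hhstar]
        simp only []
        rw [max_eq_left hx.1]
      rw [e4, ILeft_comp hβ0 hβ0 hf₂ hTr, hββ]
    rw [MeasureTheory.integral_Ioc_eq_integral_Ioo
      (f := fun r => (-deriv w (T - r)) * ∫ s in Ioc r T, hstar (T - s) * (s - r) ^ (β - 1))]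
    rw [show (∫ r in Ioo (0:ℝ) T,
          (-deriv w (T - r)) * ∫ s in Ioc r T, hstar (T - s) * (s - r) ^ (β - 1))
        = ∫ r in Ioo (0:ℝ) T, Real.Gamma β *
            ((-deriv w (T - r)) * ILeft (α + 1) (deriv (deriv v)) (T - r)) from
      setIntegral_congr_fun measurableSet_Ioo fun r hr => by
        rw [inner_eval r hr]; ring]
    rw [MeasureTheory.integral_const_mul, ← mul_assoc, one_div,
      inv_mul_cancel₀ hΓβ.ne', one_mul]
    -- substitute back r ↦ T - σ
    rw [← MeasureTheory.integral_Ioc_eq_integral_Ioo, ← intervalIntegral.integral_of_le hT.le]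
    have h4 := intervalIntegral.integral_comp_sub_left (a := (0:ℝ)) (b := T)
      (fun σ => (-deriv w σ) * ILeft (α + 1) (deriv (deriv v)) σ) T
    simp only [sub_self, sub_zero] at h4
    rw [show (∫ r in (0:ℝ)..T, (-deriv w (T - r)) * ILeft (α + 1) (deriv (deriv v)) (T - r))
        = ∫ r in (0:ℝ)..T, (fun σ => (-deriv w σ) * ILeft (α + 1) (deriv (deriv v)) σ) (T - r)
        from intervalIntegral.integral_congr fun r _ => rfl, h4]
    rw [← intervalIntegral.integral_neg]
    exact intervalIntegral.integral_congr fun σ _ => by ring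
  -- put everything together
  calc (∫ t in Ioo (0:ℝ) T,
        deriv (deriv (ILeft α (fun s => v s - v 0 - s * deriv v 0))) t * w t)
      = ∫ t in Ioo (0:ℝ) T, ILeft α (deriv (deriv v)) t * w t :=
        setIntegral_congr_fun measurableSet_Ioo fun t ht => by rw [E1 t ht]
    _ = ILeft (α + 1) (deriv (deriv v)) T * w T
        - ∫ t in (0:ℝ)..T, ILeft (α + 1) (deriv (deriv v)) t * deriv w t := compute1
    _ = (∫ t in Ioo (0:ℝ) T,
          ILeft β (deriv (deriv v)) t * ((T - t) ^ (β - 1) * w T / Real.Gamma β))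
        + ∫ t in Ioo (0:ℝ) T,
            ILeft β (deriv (deriv v)) t * ILeft β (fun s => -deriv w (T - s)) (T - t) := by
        rw [compute2, compute3]; ring
    _ = ∫ t in Ioo (0:ℝ) T,
          (ILeft β (deriv (deriv v)) t * ((T - t) ^ (β - 1) * w T / Real.Gamma β)
            + ILeft β (deriv (deriv v)) t * ILeft β (fun s => -deriv w (T - s)) (T - t)) :=
        (MeasureTheory.integral_add i1 i2).symm
    _ = ∫ t in Ioo (0:ℝ) T,
          deriv (ILeft β (fun s => deriv v s - deriv v 0)) t *
            (-(deriv (IRight β T w) t)) := by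
        refine setIntegral_congr_fun measurableSet_Ioo fun t ht => ?_
        rw [E2 t ht, E3 t ht]
        ring
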